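/- Relabeling a standard set-valued shifted tableau by a monomial agreeing with its descent set yields a weak set-valued shifted tableau: if T is a standard set-valued shifted tableau with n entries and σ = x_{s₁}x_{s₂}···x_{sₙ} satisfies s₁ ≤ s₂ ≤ ... ≤ sₙ with sᵢ < sᵢ₊₁ whenever i ∈ D(T), then the tableau T(σ) obtained by replacing the i-th smallest letter of T by sᵢ (preserving primes) is a weak set-valued shifted tableau. -/

import Mathlib

/-- A shifted tableau: list of rows; row `i` is indented `i` units. -/
abbrev Tableau := List (List ℕ)

/-- Row `i` of a tableau. -/
def trow (T : Tableau) (i : ℕ) : List ℕ := T.getD i []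

/-- Entry of `T` in row `i` and *absolute* column `j` (both 0-indexed). -/
def tentry? (T : Tableau) (i j : ℕ) : Option ℕ :=
  if i ≤ j then (trow T i)[j - i]? else none

/-- The (shifted) shape of a tableau: the list of row lengths. -/
def tshape (T : Tableau) : List ℕ := T.map List.length

/-- A strict partition: strictly decreasing list of positive integers. -/
def IsStrictPartition (l : List ℕ) : Prop :=
  List.Chain' (fun a b => b < a) l ∧ ∀ x ∈ l, 0 < x

/-- Increasing shifted tableau: shape is a shifted shape of a strict partition
(row lengths strictly decrease), entries are positive and strictly increase
along rows and down columns. -/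
def IsIncreasing (T : Tableau) : Prop :=
  (∀ r ∈ T, r ≠ []) ∧
  List.Chain' (fun r s => s.length < r.length) T ∧
  (∀ r ∈ T, List.Chain' (· < ·) r) ∧
  (∀ i j a b, tentry? T i j = some a → tentry? T (i + 1) j = some b → a < b) ∧
  (∀ r ∈ T, ∀ x ∈ r, 0 < x)


/-- Result of inserting one letter: the new tableau, the box (row, absolute
column) where the insertion terminated, and whether the insertion ended with
column insertion or a failed row insertion into an empty row (primed). -/
structure InsRes where
  tab : Tableau
  box : ℕ × ℕ
  primed : Bool
deriving Repr, DecidableEq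

def setEntry (T : Tableau) (i k x : ℕ) : Tableau := T.set i ((trow T i).set k x)

def appendEntry (T : Tableau) (i x : ℕ) : Tableau :=
  if i < T.length then T.set i (trow T i ++ [x]) else T ++ [[x]]

/-- The rows having a box in absolute column `c`. -/
def colRows (T : Tableau) (c : ℕ) : List ℕ :=
  (List.range T.length).filter (fun i => (tentry? T i c).isSome)

inductive HMode where
  | row (r : ℕ)
  | col (c : ℕ)

/-- One step of shifted Hecke insertion (Patrias–Pylyavskyy): insert `x`
into row `r` (resp. column `c`), either terminating or producing an output
letter to be inserted into the next row (resp. column). -/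
def insertStep (T : Tableau) : HMode → ℕ → InsRes ⊕ (Tableau × HMode × ℕ)
  | .row r, x =>
    let R := trow T r
    match R.findIdx? (fun a => decide (x < a)) with
    | none =>
      let kk := R.length
      let aboveOK : Bool := (r == 0) ||
        ((tentry? T (r - 1) (r + kk)).elim false (fun a => decide (a < x)))
      if ((R.isEmpty : Bool) || decide (R.getLastD 0 < x)) && aboveOK then
        .inl ⟨appendEntry T r x, (r, r + kk), false⟩
      else if R.isEmpty then
        .inl ⟨T, (r - 1, (r - 1) + (trow T (r - 1)).length - 1), true⟩
      else
        .inl ⟨T, ((colRows T (r + kk - 1)).getLastD 0, r + kk - 1), false⟩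
    | some k =>
      let y := R.getD k 0
      let ok : Bool := ((k == 0) || decide (R.getD (k - 1) 0 < x)) &&
        ((r == 0) || (tentry? T (r - 1) (r + k)).elim true (fun a => decide (a < x)))
      let T' := if ok then setEntry T r k x else T
      if k == 0 then .inr (T', .col (r + 1), y) else .inr (T', .row (r + 1), y)
  | .col c, x =>
    let rows := colRows T c
    match rows.find? (fun i => decide (x < (tentry? T i c).getD 0)) with
    | none =>
      let istar := (rows.getLast?).elim 0 (· + 1)
      let k := c - istar
      let R := trow T istar
      let ok : Bool := decide (istar ≤ c) && (R.length == k) &&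
        ((k == 0) || decide (R.getD (k - 1) 0 < x)) &&
        ((istar == 0) || (tentry? T (istar - 1) c).elim false (fun a => decide (a < x)))
      if ok then
        .inl ⟨appendEntry T istar x, (istar, c), true⟩
      else
        let ib := rows.getLastD 0
        .inl ⟨T, (ib, ib + (trow T ib).length - 1), true⟩
    | some i =>
      let k := c - i
      let y := (trow T i).getD k 0
      let ok : Bool := ((k == 0) || decide ((trow T i).getD (k - 1) 0 < x)) &&
        ((i == 0) || (tentry? T (i - 1) c).elim true (fun a => decide (a < x)))
      let T' := if ok then setEntry T i k x else T
      .inr (T', .col (c + 1), y)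

def insertAux : ℕ → Tableau → HMode → ℕ → InsRes
  | 0, T, _, _ => ⟨T, (0, 0), false⟩
  | fuel + 1, T, m, x =>
    match insertStep T m x with
    | .inl res => res
    | .inr (T', m', x') => insertAux fuel T' m' x'

/-- Shifted Hecke insertion of a single letter `x` into `T`. -/
def insert1 (T : Tableau) (x : ℕ) : InsRes :=
  insertAux (T.length + (trow T 0).length + x + 10) T (.row 0) x

/-- Set-valued shifted tableaux (and weak set-valued shifted tableaux) are
fillings of a shifted shape by multisets of entries `(v, p)`, where `p = true`
means the entry is the primed letter `v'`. -/
abbrev SVTRep := List (List (Multiset (ℕ × Bool)))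

def tabRecStep (TQ : Tableau × SVTRep) (ix : ℕ × ℕ) : Tableau × SVTRep :=
  let res := insert1 TQ.1 ix.2
  let l : ℕ × Bool := (ix.1 + 1, res.primed)
  let r := res.box.1
  let k := res.box.2 - res.box.1
  let Q := TQ.2
  let Q' :=
    if tshape res.tab ≠ tshape TQ.1 then
      if r < Q.length then Q.set r ((Q.getD r []) ++ [{l}]) else Q ++ [[{l}]]
    else
      Q.set r ((Q.getD r []).set k (l ::ₘ (Q.getD r []).getD k 0))
  (res.tab, Q')

def tabRec (w : List ℕ) : Tableau × SVTRep := ((List.range w.length).zip w).foldl tabRecStep ([], [])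

/-- The shifted Hecke insertion tableau of a word. -/
def Tab (w : List ℕ) : Tableau := (tabRec w).1

/-- The shifted Hecke insertion recording tableau of a word. -/
def Rec (w : List ℕ) : SVTRep := (tabRec w).2

/-- Key giving the total order `1' < 1 < 2' < 2 < ⋯` ((v, true) means `v'`). -/
def keyOf (e : ℕ × Bool) : ℕ := 2 * e.1 - (if e.2 then 1 else 0)

def boxAt (T : SVTRep) (i k : ℕ) : Multiset (ℕ × Bool) := (T.getD i []).getD k 0

def sshape (T : SVTRep) : List ℕ := T.map List.length

/-- The multiset of all entries of a (weak) set-valued shifted tableau. -/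
def totalMS (T : SVTRep) : Multiset (ℕ × Bool) := (T.map (fun r => r.sum)).sum

/-- Weak set-valued shifted tableau: boxes of a shifted shape filled with
finite nonempty multisets of primed/unprimed positive integers, rows and
columns weakly increasing between boxes, no primed entries on the main
diagonal, each unprimed letter in at most one box per column, each primed
letter in at most one box per row. -/
def IsWSVT (T : SVTRep) : Prop :=
  (∀ r ∈ T, r ≠ []) ∧
  List.Chain' (fun r s => s.length < r.length) T ∧
  (∀ r ∈ T, ∀ b ∈ r, b ≠ 0) ∧
  (∀ e ∈ totalMS T, 0 < e.1) ∧
  (∀ i k, ∀ x ∈ boxAt T i k, ∀ y ∈ boxAt T i (k + 1), keyOf x ≤ keyOf y) ∧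
  (∀ i k, ∀ x ∈ boxAt T i (k + 1), ∀ y ∈ boxAt T (i + 1) k, keyOf x ≤ keyOf y) ∧
  (∀ i, ∀ e ∈ boxAt T i 0, e.2 = false) ∧
  (∀ v c : ℕ, {i | i ≤ c ∧ (v, false) ∈ boxAt T i (c - i)}.Subsingleton) ∧
  (∀ v i : ℕ, {k | (v, true) ∈ boxAt T i k}.Subsingleton)

/-- Set-valued shifted tableau: boxes contain (nonempty) *sets*. -/
def IsSVT (T : SVTRep) : Prop := IsWSVT T ∧ ∀ r ∈ T, ∀ b ∈ r, b.Nodup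

/-- Standard set-valued shifted tableau on `n` letters: each of `1, …, n`
appears exactly once, either primed or unprimed. -/
def IsStdSVT (n : ℕ) (T : SVTRep) : Prop :=
  IsSVT T ∧ Multiset.map Prod.fst (totalMS T) = (Finset.Icc 1 n).val

/-- Position (row, index-in-row) of the box containing a given entry. -/
def posOf (Q : SVTRep) (e : ℕ × Bool) : Option (ℕ × ℕ) :=
  (List.range Q.length).findSome? (fun i =>
    ((Q.getD i []).findIdx? (fun b => decide (e ∈ b))).map (fun k => (i, k)))

/-- Descent set of a standard set-valued shifted tableau. -/
def Ddesc (Q : SVTRep) : Set ℕ :=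
  {i | 1 ≤ i ∧ (
    ((posOf Q (i, false)).isSome ∧ (posOf Q (i + 1, true)).isSome) ∨
    (∃ p q, posOf Q (i, false) = some p ∧ posOf Q (i + 1, false) = some q ∧ p.1 < q.1) ∨
    (∃ p q, posOf Q (i, true) = some p ∧ posOf Q (i + 1, true) = some q ∧
      q.1 ≤ p.1 ∧ p ≠ q))}

/-- Descent set of a word (1-indexed): `{i : wᵢ > wᵢ₊₁}`. -/
def Dword (w : List ℕ) : Set ℕ :=
  {i | 1 ≤ i ∧ i + 1 ≤ w.length ∧ w.getD i 0 < w.getD (i - 1) 0}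

/-- Boxes (with multiplicity) containing the primed letter `v'`, top to bottom. -/
def occP (T : SVTRep) (v : ℕ) : List ((ℕ × ℕ) × ℕ) :=
  (List.range T.length).flatMap (fun i =>
    (List.range (T.getD i []).length).filterMap (fun k =>
      let m := (boxAt T i k).count (v, true)
      if m = 0 then none else some ((i, k), m)))

/-- Boxes (with multiplicity) containing the unprimed letter `v`, left to right. -/
def occU (T : SVTRep) (v : ℕ) : List ((ℕ × ℕ) × ℕ) :=
  ((List.range T.length).flatMap (fun i =>
    (List.range (T.getD i []).length).filterMap (fun k =>
      let m := (boxAt T i k).count (v, false)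
      if m = 0 then none else some ((i, k), m)))).mergeSort
    (fun p q => p.1.1 + p.1.2 ≤ q.1.1 + q.1.2)

/-- All occurrences of entries of `T` in the order `1' < 1 < 2' < 2 < ⋯`,
occurrences of `v` read left to right and of `v'` top to bottom. -/
def allOcc (T : SVTRep) : List ((ℕ × ℕ) × ℕ × Bool) :=
  (List.range (((totalMS T).map Prod.fst).sum)).flatMap (fun v0 =>
    (occP T (v0 + 1)).map (fun o => (o.1, o.2, true)) ++
    (occU T (v0 + 1)).map (fun o => (o.1, o.2, false)))

def addLabels (S : SVTRep) (p : ℕ × ℕ) (start m : ℕ) (pr : Bool) : SVTRep :=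
  S.set p.1 ((S.getD p.1 []).set p.2
    ((((List.range m).map (fun t => (start + t + 1, pr)) : List (ℕ × Bool)) : Multiset _) +
      (S.getD p.1 []).getD p.2 0))

/-- Standardization of a weak set-valued shifted tableau. -/
def stdize (T : SVTRep) : SVTRep :=
  ((allOcc T).foldl
    (fun Sn o => (addLabels Sn.1 o.1 Sn.2 o.2.1 o.2.2, Sn.2 + o.2.1))
    (T.map (fun r => r.map (fun _ => (0 : Multiset (ℕ × Bool)))), 0)).1
/-! ### Weak K-Knuth equivalence -/

/-- A single weak K-Knuth relation (Buch–Samuel), for positive letters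
`a < b < c`. -/
inductive KStep : List ℕ → List ℕ → Prop
  | dup (u v : List ℕ) (a : ℕ) (ha : 0 < a) :
      KStep (u ++ [a, a] ++ v) (u ++ [a] ++ v)
  | aba (u v : List ℕ) (a b : ℕ) (ha : 0 < a) (hab : a < b) :
      KStep (u ++ [a, b, a] ++ v) (u ++ [b, a, b] ++ v)
  | bac (u v : List ℕ) (a b c : ℕ) (ha : 0 < a) (hab : a < b) (hbc : b < c) :
      KStep (u ++ [b, a, c] ++ v) (u ++ [b, c, a] ++ v)
  | acb (u v : List ℕ) (a b c : ℕ) (ha : 0 < a) (hab : a < b) (hbc : b < c) :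
      KStep (u ++ [a, c, b] ++ v) (u ++ [c, a, b] ++ v)
  | front (u : List ℕ) (a b : ℕ) (ha : 0 < a) (hab : a < b) :
      KStep ([a, b] ++ u) ([b, a] ++ u)

/-- Weak K-Knuth equivalence: symmetric transitive (and reflexive) closure of
the weak K-Knuth relations. -/
def WeakKKnuth : List ℕ → List ℕ → Prop := Relation.EqvGen KStep

/-- Restriction of a word to the letters lying in the interval `[lo, hi]`. -/
def restrictWord (lo hi : ℕ) (w : List ℕ) : List ℕ :=
  w.filter (fun x => decide (lo ≤ x ∧ x ≤ hi))

/-- A word of positive integers. -/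
def PosWord (w : List ℕ) : Prop := ∀ x ∈ w, 0 < x

/-- The reading word of a tableau: rows left to right, bottom to top. -/
def rowword (T : Tableau) : List ℕ := T.reverse.flatten

/-- Unique rectification target: the only increasing shifted tableau in its
weak K-Knuth equivalence class. -/
def IsURT (T : Tableau) : Prop :=
  IsIncreasing T ∧
  ∀ T' : Tableau, IsIncreasing T' → WeakKKnuth (rowword T') (rowword T) → T' = T

/-- The minimal increasing shifted tableau of shape `λ`. -/
def Mtab (lam : List ℕ) : Tableau :=
  (List.range lam.length).map (fun i =>
    (List.range (lam.getD i 0)).map (fun p => 2 * i + p + 1))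

/-! ### Symmetric-function layer -/

/-- Number of entries of `T` equal to `v` or `v'`. -/
def wtOf (T : SVTRep) (v : ℕ) : ℕ := ((totalMS T).filter (fun e => e.1 = v)).card

/-- The weak shifted stable Grothendieck polynomial `K_λ`: the generating
function of weak set-valued shifted tableaux of shape `λ`. -/
noncomputable def Kser (lam : List ℕ) : MvPowerSeries ℕ ℚ :=
  fun μ => (Set.ncard {T : SVTRep | IsWSVT T ∧ sshape T = lam ∧ ∀ v, μ v = wtOf T v} : ℚ)

/-- The shifted stable Grothendieck polynomial `GP_λ` of Ikeda–Naruse: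
`GP_λ = Σ_T (-1)^{|T| - |λ|} x^T` over set-valued shifted tableaux of shape `λ`. -/
noncomputable def GPser (lam : List ℕ) : MvPowerSeries ℕ ℚ :=
  fun μ => ((-1 : ℚ)) ^ (μ.sum (fun _ e => e) - lam.sum) *
    (Set.ncard {T : SVTRep | IsSVT T ∧ sshape T = lam ∧ ∀ v, μ v = wtOf T v} : ℚ)

/-- Substitution `xᵢ ↦ -xᵢ/(1 - xᵢ)` in a multivariate power series, computed
coefficientwise: `[x^b] f(-x/(1-x)) = Σ_{a ≤ b} ([x^a] f) ∏ᵢ (-1)^{aᵢ} C(bᵢ-1, aᵢ-1)`,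
using that `(-x/(1-x))^a = Σ_{b ≥ a} (-1)^a C(b-1, a-1) x^b`. -/
noncomputable def substFrac (f : MvPowerSeries ℕ ℚ) : MvPowerSeries ℕ ℚ :=
  fun b => ∑ a ∈ Finset.Iic b, (MvPowerSeries.coeff a f) *
    ∏ i ∈ b.support,
      (if a i = 0 then 0 else
        ((-1 : ℚ)) ^ (a i) * (Nat.choose (b i - 1) (a i - 1) : ℚ))

/-- A power series in variables `x₀, x₁, …` is symmetric if it is invariant
under every permutation of the variables. -/
def IsSymmPS (f : MvPowerSeries ℕ ℚ) : Prop :=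
  ∀ (σ : Equiv.Perm ℕ) (μ : ℕ →₀ ℕ),
    MvPowerSeries.coeff (Finsupp.equivMapDomain σ μ) f = MvPowerSeries.coeff μ f

/-- The fundamental quasisymmetric function `f_D` for words of length `m`
(descent positions `D`, 1-indexed): `Σ x_{i₁} ⋯ x_{iₘ}` over
`i₁ ≤ ⋯ ≤ iₘ` with `i_j < i_{j+1}` whenever `j ∈ D`. -/
noncomputable def fQ (m : ℕ) (D : Set ℕ) : MvPowerSeries ℕ ℚ :=
  fun μ => (Set.ncard {s : ℕ → ℕ |
    (∀ i, 1 ≤ i → i ≤ m → 1 ≤ s i) ∧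
    (∀ i, i = 0 ∨ m < i → s i = 0) ∧
    (∀ i, 1 ≤ i → i + 1 ≤ m → s i ≤ s (i + 1)) ∧
    (∀ i ∈ D, 1 ≤ i → i + 1 ≤ m → s i < s (i + 1)) ∧
    (∀ v, μ v = Set.ncard {i | 1 ≤ i ∧ i ≤ m ∧ s i = v})} : ℚ)

/-- `IsShuffle u v w` : `w` is a shuffle (interleaving) of `u` and `v`. -/
inductive IsShuffle : List ℕ → List ℕ → List ℕ → Prop
  | nil : IsShuffle [] [] []
  | left {u v w : List ℕ} (a : ℕ) : IsShuffle u v w → IsShuffle (a :: u) v (a :: w)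
  | right {u v w : List ℕ} (a : ℕ) : IsShuffle u v w → IsShuffle u (a :: v) (a :: w)

/-! ### Skew shifted tableaux -/

/-- Entry of a skew filling `R` of shape `ν/λ` in row `i`, absolute column `j`. -/
def skentry? (lam : List ℕ) (R : List (List ℕ)) (i j : ℕ) : Option ℕ :=
  if i + lam.getD i 0 ≤ j then (R.getD i [])[j - i - lam.getD i 0]? else none

/-- Increasing shifted skew tableau of shape `ν/λ`. -/
def IsIncSkew (lam nu : List ℕ) (R : List (List ℕ)) : Prop :=
  lam.length ≤ nu.length ∧ (∀ i, lam.getD i 0 ≤ nu.getD i 0) ∧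
  R.length = nu.length ∧
  (∀ i, (R.getD i []).length = nu.getD i 0 - lam.getD i 0) ∧
  (∀ r ∈ R, List.Chain' (· < ·) r) ∧
  (∀ r ∈ R, ∀ x ∈ r, 0 < x) ∧
  (∀ i j a b, skentry? lam R i j = some a → skentry? lam R (i + 1) j = some b → a < b)

/-! ### Unshifted Hecke insertion and stable Grothendieck polynomials -/

/-- Hecke insertion (Buch–Kresch–Shimozono–Tamvakis–Yong) of a letter into the
rows of an (unshifted) increasing tableau; `prev` is the previous row. -/
def hIns : Option (List ℕ) → List (List ℕ) → ℕ → List (List ℕ)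
  | prev, [], x =>
      match prev with
      | none => [[x]]
      | some P => if P.getD 0 0 < x then [[x]] else []
  | prev, R :: rest, x =>
    match R.findIdx? (fun a => decide (x < a)) with
    | none =>
      let ok : Bool := ((R.isEmpty : Bool) || decide (R.getLastD 0 < x)) &&
        (prev.elim true (fun P => decide (R.length < P.length) && decide (P.getD R.length 0 < x)))
      if ok then (R ++ [x]) :: rest else R :: rest
    | some k =>
      let y := R.getD k 0
      let ok : Bool := ((k == 0) || decide (R.getD (k - 1) 0 < x)) &&
        (prev.elim true (fun P => decide (P.getD k 0 < x)))
      let R' := if ok then R.set k x else R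
      R' :: hIns (some R') rest y

/-- The (unshifted) Hecke insertion tableau `P_K(w)` of a word. -/
def PK (w : List ℕ) : List (List ℕ) := w.foldl (fun T x => hIns none T x) []

/-- Unshifted set-valued tableaux: boxes filled by finite nonempty sets. -/
abbrev USVRep := List (List (Multiset ℕ))

def uboxAt (T : USVRep) (i k : ℕ) : Multiset ℕ := (T.getD i []).getD k 0

/-- Set-valued tableau of (unshifted) partition shape: rows weakly increase,
columns weakly increase between boxes, and each integer appears in at most one
box of each column. -/
def IsUSV (T : USVRep) : Prop :=
  (∀ r ∈ T, r ≠ []) ∧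
  List.Chain' (fun r s => s.length ≤ r.length) T ∧
  (∀ r ∈ T, ∀ b ∈ r, b ≠ 0 ∧ b.Nodup) ∧
  (∀ r ∈ T, ∀ b ∈ r, ∀ x ∈ b, 0 < x) ∧
  (∀ i k, ∀ x ∈ uboxAt T i k, ∀ y ∈ uboxAt T i (k + 1), x ≤ y) ∧
  (∀ i k, ∀ x ∈ uboxAt T i k, ∀ y ∈ uboxAt T (i + 1) k, x ≤ y) ∧
  (∀ v k : ℕ, {i | v ∈ uboxAt T i k}.Subsingleton)

def uwt (T : USVRep) (v : ℕ) : ℕ :=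
  (((T.map (fun r => r.sum)).sum : Multiset ℕ).filter (fun x => x = v)).card

/-- The (signless) stable Grothendieck polynomial `G_μ`: generating function
of set-valued tableaux of shape `μ`. -/
noncomputable def Gser (mu : List ℕ) : MvPowerSeries ℕ ℚ :=
  fun μ => (Set.ncard {T : USVRep | IsUSV T ∧ T.map List.length = mu ∧ ∀ v, μ v = uwt T v} : ℚ)
/-- Relabeling a (standard) set-valued shifted tableau: the letter `i`
(primed or not) is replaced by `s i`, preserving primes. -/
def relabel (s : ℕ → ℕ) (T : SVTRep) : SVTRep :=
  T.map (fun r => r.map (Multiset.map (fun e => (s e.1, e.2))))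


section Stmt12Aux

private lemma getD_map' {α β : Type*} (f : α → β) (l : List α) (i : ℕ) (d : α) :
    (l.map f).getD i (f d) = f (l.getD i d) := by
  simp only [List.getD_eq_getElem?_getD, List.getElem?_map]
  cases l[i]? <;> simp

private lemma row_relabel (s : ℕ → ℕ) (T : SVTRep) (i : ℕ) :
    (relabel s T).getD i [] =
      (T.getD i []).map (Multiset.map (fun e => (s e.1, e.2))) := by
  simpa [relabel] using
    getD_map' (List.map (Multiset.map (fun e : ℕ × Bool => (s e.1, e.2)))) T i []

private lemma boxAt_relabel (s : ℕ → ℕ) (T : SVTRep) (i k : ℕ) :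
    boxAt (relabel s T) i k = (boxAt T i k).map (fun e => (s e.1, e.2)) := by
  unfold boxAt
  rw [row_relabel]
  simpa using
    getD_map' (Multiset.map (fun e : ℕ × Bool => (s e.1, e.2))) (T.getD i []) k 0

private lemma mem_listSum {α : Type*} {e : α} {l : List (Multiset α)} :
    e ∈ l.sum ↔ ∃ m ∈ l, e ∈ m := by
  induction l with
  | nil => simp
  | cons x t ih => simp [Multiset.mem_add, ih]

private lemma le_listSum {α : Type*} {m : Multiset α} {l : List (Multiset α)}
    (h : m ∈ l) : m ≤ l.sum := by
  induction l with
  | nil => simp at h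
  | cons x t ih =>
    rcases List.mem_cons.mp h with rfl | h
    · simpa using Multiset.le_add_right _ _
    · exact (ih h).trans (by simpa using le_add_self)

private lemma getD_mem_of_lt {α : Type*} {l : List α} {i : ℕ} (d : α)
    (h : i < l.length) : l.getD i d ∈ l := by
  rw [List.getD_eq_getElem?_getD, List.getElem?_eq_getElem h]
  exact List.getElem_mem h

private lemma two_getD_le_sum {α : Type*} (l : List (Multiset α)) {i j : ℕ}
    (hij : i < j) (hj : j < l.length) :
    l.getD i 0 + l.getD j 0 ≤ l.sum := by
  induction l generalizing i j with
  | nil => simp at hj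
  | cons x t ih =>
    cases j with
    | zero => omega
    | succ jj =>
      cases i with
      | zero =>
        have hjj : jj < t.length := by simpa using hj
        have hm : t.getD jj 0 ≤ t.sum := le_listSum (getD_mem_of_lt _ hjj)
        simpa using add_le_add_left hm x
      | succ ii =>
        have := ih (by omega : ii < jj) (by simpa using hj)
        calc t.getD ii 0 + t.getD jj 0 ≤ t.sum := this
        _ ≤ (x :: t).sum := by simpa using le_add_self

private lemma boxAt_valid {T : SVTRep} {i k : ℕ} {e : ℕ × Bool}
    (h : e ∈ boxAt T i k) :
    i < T.length ∧ k < (T.getD i []).length := by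
  constructor
  · by_contra hi
    push_neg at hi
    have hrow : List.getD T i [] = [] := by
      rw [List.getD_eq_getElem?_getD, List.getElem?_eq_none hi]
      rfl
    unfold boxAt at h
    rw [hrow] at h
    simp [List.getD_eq_getElem?_getD] at h
  · by_contra hk
    push_neg at hk
    unfold boxAt at h
    rw [List.getD_eq_getElem?_getD, List.getElem?_eq_none hk] at h
    simp at h

private lemma boxAt_eq_getElem {T : SVTRep} {i k : ℕ}
    (hk : k < (T.getD i []).length) :
    boxAt T i k = (T.getD i [])[k] := by
  unfold boxAt
  rw [List.getD_eq_getElem?_getD, List.getElem?_eq_getElem hk]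
  rfl

private lemma rowsum_getD {T : SVTRep} {i : ℕ} (hi : i < T.length) :
    (T.map (fun r => r.sum)).getD i 0 = (T.getD i []).sum := by
  rw [List.getD_eq_getElem?_getD, List.getElem?_map, List.getElem?_eq_getElem hi,
    List.getD_eq_getElem?_getD, List.getElem?_eq_getElem hi]
  rfl

private lemma boxAt_le_totalMS {T : SVTRep} {i k : ℕ}
    (hi : i < T.length) (hk : k < (T.getD i []).length) :
    boxAt T i k ≤ totalMS T := by
  have h1 : boxAt T i k ≤ (T.getD i []).sum := le_listSum (by
    rw [boxAt_eq_getElem hk]; exact List.getElem_mem hk)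
  refine h1.trans (le_listSum ?_)
  exact List.mem_map_of_mem (getD_mem_of_lt _ hi)

private lemma mem_totalMS_of_boxAt {T : SVTRep} {i k : ℕ} {e : ℕ × Bool}
    (h : e ∈ boxAt T i k) : e ∈ totalMS T := by
  obtain ⟨hi, hk⟩ := boxAt_valid h
  exact Multiset.mem_of_le (boxAt_le_totalMS hi hk) h

private lemma two_boxAt_le_totalMS {T : SVTRep} {i k i' k' : ℕ}
    (h : (i, k) ≠ (i', k'))
    (hi : i < T.length) (hk : k < (T.getD i []).length)
    (hi' : i' < T.length) (hk' : k' < (T.getD i' []).length) :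
    boxAt T i k + boxAt T i' k' ≤ totalMS T := by
  rcases eq_or_ne i i' with rfl | hne
  · have hkk : k ≠ k' := by simpa using h
    have hrow : boxAt T i k + boxAt T i k' ≤ (T.getD i []).sum := by
      rcases lt_or_gt_of_ne hkk with hlt | hgt
      · exact two_getD_le_sum _ hlt hk'
      · rw [add_comm]; exact two_getD_le_sum _ hgt hk
    refine hrow.trans (le_listSum ?_)
    exact List.mem_map_of_mem (getD_mem_of_lt _ hi)
  · have h1 : boxAt T i k ≤ (T.getD i []).sum := le_listSum (by
      rw [boxAt_eq_getElem hk]; exact List.getElem_mem hk)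
    have h2 : boxAt T i' k' ≤ (T.getD i' []).sum := le_listSum (by
      rw [boxAt_eq_getElem hk']; exact List.getElem_mem hk')
    have h3 : (T.getD i []).sum + (T.getD i' []).sum ≤ totalMS T := by
      have hml : i < (T.map (fun r => r.sum)).length := by simpa using hi
      have hml' : i' < (T.map (fun r => r.sum)).length := by simpa using hi'
      rcases lt_or_gt_of_ne hne with hlt | hgt
      · have := two_getD_le_sum (T.map (fun r => r.sum)) hlt hml'
        rwa [rowsum_getD hi, rowsum_getD hi'] at this
      · have := two_getD_le_sum (T.map (fun r => r.sum)) hgt hml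
        rw [rowsum_getD hi, rowsum_getD hi'] at this
        rwa [add_comm] at this
    exact (add_le_add h1 h2).trans h3

private lemma letter_range {n : ℕ} {T : SVTRep}
    (hstd : Multiset.map Prod.fst (totalMS T) = (Finset.Icc 1 n).val)
    {e : ℕ × Bool} (he : e ∈ totalMS T) : 1 ≤ e.1 ∧ e.1 ≤ n := by
  have : e.1 ∈ Multiset.map Prod.fst (totalMS T) := Multiset.mem_map_of_mem _ he
  rw [hstd] at this
  exact Finset.mem_Icc.mp this

private lemma count_le_one {n : ℕ} {T : SVTRep}
    (hstd : Multiset.map Prod.fst (totalMS T) = (Finset.Icc 1 n).val) (a : ℕ) :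
    Multiset.card (Multiset.filter (fun e => a = e.1) (totalMS T)) ≤ 1 := by
  have h1 := Multiset.count_map Prod.fst (totalMS T) a
  rw [hstd] at h1
  have h2 : Multiset.count a (Finset.Icc 1 n).val ≤ 1 :=
    Multiset.nodup_iff_count_le_one.mp (Finset.Icc 1 n).nodup a
  omega

private lemma two_of_mem_ne {α : Type*} [DecidableEq α] {x y : α} {m : Multiset α}
    (hxy : x ≠ y) (hx : x ∈ m) (hy : y ∈ m) : 2 ≤ Multiset.card m := by
  have h1 : y ∈ m.erase x := (Multiset.mem_erase_of_ne hxy.symm).mpr hy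
  have h2 : 0 < Multiset.card (m.erase x) := Multiset.card_pos_iff_exists_mem.mpr ⟨y, h1⟩
  have h3 := Multiset.cons_erase hx
  have h4 : Multiset.card m = Multiset.card (m.erase x) + 1 := by
    conv_lhs => rw [← h3]
    rw [Multiset.card_cons]
  omega

private lemma occ_unique {n : ℕ} {T : SVTRep}
    (hstd : Multiset.map Prod.fst (totalMS T) = (Finset.Icc 1 n).val)
    {a : ℕ} {p q : Bool} {i k i' k' : ℕ}
    (h1 : (a, p) ∈ boxAt T i k) (h2 : (a, q) ∈ boxAt T i' k') :
    p = q ∧ i = i' ∧ k = k' := by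
  by_contra hcon
  obtain ⟨hi, hk⟩ := boxAt_valid h1
  obtain ⟨hi', hk'⟩ := boxAt_valid h2
  have key : 2 ≤ Multiset.card (Multiset.filter (fun e => a = e.1) (totalMS T)) := by
    rcases eq_or_ne (i, k) (i', k') with heq | hne
    · obtain ⟨rfl, rfl⟩ : i = i' ∧ k = k' := Prod.mk.inj heq
      have hpq : p ≠ q := by tauto
      have hb := Multiset.filter_le_filter (fun e => a = e.1) (boxAt_le_totalMS hi hk)
      have h2c : 2 ≤ Multiset.card (Multiset.filter (fun e => a = e.1) (boxAt T i k)) :=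
        two_of_mem_ne (show ((a, p) : ℕ × Bool) ≠ (a, q) by simp [hpq])
          (Multiset.mem_filter.mpr ⟨h1, rfl⟩) (Multiset.mem_filter.mpr ⟨h2, rfl⟩)
      exact h2c.trans (Multiset.card_le_card hb)
    · have hb := Multiset.filter_le_filter (fun e => a = e.1)
        (two_boxAt_le_totalMS hne hi hk hi' hk')
      have hcard := Multiset.card_le_card hb
      rw [Multiset.filter_add, Multiset.card_add] at hcard
      have c1 : 0 < Multiset.card (Multiset.filter (fun e => a = e.1) (boxAt T i k)) :=
        Multiset.card_pos_iff_exists_mem.mpr ⟨(a, p), Multiset.mem_filter.mpr ⟨h1, rfl⟩⟩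
      have c2 : 0 < Multiset.card (Multiset.filter (fun e => a = e.1) (boxAt T i' k')) :=
        Multiset.card_pos_iff_exists_mem.mpr ⟨(a, q), Multiset.mem_filter.mpr ⟨h2, rfl⟩⟩
      omega
  have := count_le_one hstd a
  omega

private lemma exists_box_of_mem_totalMS {T : SVTRep} {e : ℕ × Bool}
    (he : e ∈ totalMS T) : ∃ i k, e ∈ boxAt T i k := by
  unfold totalMS at he
  rw [mem_listSum] at he
  obtain ⟨m, hm, hem⟩ := he
  obtain ⟨row, hrow, rfl⟩ := List.mem_map.mp hm
  rw [mem_listSum] at hem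
  obtain ⟨box, hbox, hebox⟩ := hem
  obtain ⟨i, hi, hTi⟩ := List.getElem_of_mem hrow
  obtain ⟨k, hk, hrk⟩ := List.getElem_of_mem hbox
  refine ⟨i, k, ?_⟩
  have hrow' : T.getD i [] = row := by
    rw [List.getD_eq_getElem?_getD, List.getElem?_eq_getElem hi, hTi]
    rfl
  unfold boxAt
  rw [hrow', List.getD_eq_getElem?_getD, List.getElem?_eq_getElem hk,
    Option.getD_some, hrk]
  exact hebox

private lemma exists_occ {n : ℕ} {T : SVTRep}
    (hstd : Multiset.map Prod.fst (totalMS T) = (Finset.Icc 1 n).val)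
    {j : ℕ} (h1 : 1 ≤ j) (h2 : j ≤ n) : ∃ p i k, (j, p) ∈ boxAt T i k := by
  have hj : j ∈ Multiset.map Prod.fst (totalMS T) := by
    rw [hstd]
    exact Finset.mem_Icc.mpr ⟨h1, h2⟩
  obtain ⟨e, he, hfst⟩ := Multiset.mem_map.mp hj
  obtain ⟨i, k, hik⟩ := exists_box_of_mem_totalMS he
  refine ⟨e.2, i, k, ?_⟩
  have : e = (j, e.2) := by
    cases e; simp_all
  rwa [this] at hik

private lemma findSome?_mid {α β : Type*} {g : α → Option β} {l₁ l₂ : List α} {x : α} {b : β}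
    (hn : ∀ y ∈ l₁, g y = none) (hx : g x = some b) :
    (l₁ ++ x :: l₂).findSome? g = some b := by
  induction l₁ with
  | nil => simp [List.findSome?_cons, hx]
  | cons a t ih =>
    have ha : g a = none := hn a (by simp)
    rw [List.cons_append, List.findSome?_cons, ha]
    exact ih (fun y hy => hn y (by simp [hy]))

private lemma range_decomp {i N : ℕ} (h : i < N) :
    List.range N = List.range i ++ i :: List.map (fun x => i + 1 + x) (List.range (N - i - 1)) := by
  conv_lhs => rw [show N = i + ((N - i - 1) + 1) by omega]
  rw [List.range_add, List.range_succ_eq_map]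
  simp only [List.map_cons, List.map_map, Nat.add_zero]
  congr 1
  congr 1
  apply List.map_congr_left
  intro x _
  simp only [Function.comp_apply]
  omega

private lemma posOf_eq {n : ℕ} {T : SVTRep}
    (hstd : Multiset.map Prod.fst (totalMS T) = (Finset.Icc 1 n).val)
    {a : ℕ} {p : Bool} {i k : ℕ} (h : (a, p) ∈ boxAt T i k) :
    posOf T (a, p) = some (i, k) := by
  obtain ⟨hi, hk⟩ := boxAt_valid h
  have huniq : ∀ i' k', (a, p) ∈ boxAt T i' k' → i' = i ∧ k' = k := by
    intro i' k' h'
    obtain ⟨_, h2, h3⟩ := occ_unique hstd h' h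
    exact ⟨h2, h3⟩
  have hIdx : (T.getD i []).findIdx? (fun b => decide ((a, p) ∈ b)) = some k := by
    have hex : ∃ x ∈ T.getD i [], (fun b => decide ((a, p) ∈ b)) x = true := by
      refine ⟨boxAt T i k, ?_, by simp [h]⟩
      rw [boxAt_eq_getElem hk]; exact List.getElem_mem hk
    rw [List.findIdx?_eq_some_of_exists hex]
    congr 1
    refine (List.findIdx_eq hk).mpr ⟨?_, ?_⟩
    · rw [← boxAt_eq_getElem hk]; simp [h]
    · intro j hj
      simp only [decide_eq_false_iff_not]
      intro hmem
      have : (a, p) ∈ boxAt T i j := by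
        rw [boxAt_eq_getElem (by omega)]; exact hmem
      have := (huniq i j this).2
      omega
  have hnone : ∀ i'' , i'' < i →
      ((T.getD i'' []).findIdx? (fun b => decide ((a, p) ∈ b))).map
        (fun k' => (i'', k')) = none := by
    intro i'' hi''
    have : (T.getD i'' []).findIdx? (fun b => decide ((a, p) ∈ b)) = none := by
      rw [List.findIdx?_eq_none_iff]
      intro x hx
      simp only [decide_eq_false_iff_not]
      intro hmem
      obtain ⟨k'', hk'', hxeq⟩ := List.getElem_of_mem hx
      have : (a, p) ∈ boxAt T i'' k'' := by
        rw [boxAt_eq_getElem hk'', hxeq]; exact hmem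
      have := (huniq i'' k'' this).1
      omega
    rw [this]; rfl
  show (List.range T.length).findSome? _ = some (i, k)
  rw [range_decomp hi]
  refine findSome?_mid (fun y hy => hnone y (List.mem_range.mp hy)) ?_
  rw [hIdx]; rfl

private lemma key_le_of_row {T : SVTRep} (hW : IsWSVT T) {i k k' : ℕ} (hkk : k < k')
    {x y : ℕ × Bool} (hx : x ∈ boxAt T i k) (hy : y ∈ boxAt T i k') :
    keyOf x ≤ keyOf y := by
  obtain ⟨hW1, hW2, hW3, hW4, hW5, hW6, hrest⟩ := hW
  obtain ⟨hi, hk⟩ := boxAt_valid hx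
  have main : ∀ m, k + 1 ≤ m → ∀ y, y ∈ boxAt T i m → keyOf x ≤ keyOf y := by
    intro m hm
    induction m, hm using Nat.le_induction with
    | base => intro y hy; exact hW5 i k x hx y hy
    | succ m hm ih =>
      intro y hy
      obtain ⟨_, hm1⟩ := boxAt_valid hy
      have hbm : boxAt T i m ∈ T.getD i [] := by
        rw [boxAt_eq_getElem (by omega)]; exact List.getElem_mem (by omega)
      have hne : boxAt T i m ≠ 0 := hW3 _ (getD_mem_of_lt _ hi) _ hbm
      obtain ⟨z, hz⟩ := Multiset.exists_mem_of_ne_zero hne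
      exact (ih z hz).trans (hW5 i m z hz y hy)
  exact main k' hkk y hy

private lemma key_le_of_col {T : SVTRep} (hW : IsWSVT T) {c i i' : ℕ} (hii : i < i')
    (hic : i' ≤ c) {x y : ℕ × Bool}
    (hx : x ∈ boxAt T i (c - i)) (hy : y ∈ boxAt T i' (c - i')) :
    keyOf x ≤ keyOf y := by
  obtain ⟨hW1, hW2, hW3, hW4, hW5, hW6, hrest⟩ := hW
  have hlen : ∀ m, m + 1 < T.length →
      (T.getD (m + 1) []).length < (T.getD m []).length := by
    intro m hm
    have := List.isChain_iff_getElem.mp hW2 m (by omega)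
    simpa [List.get_eq_getElem, List.getD_eq_getElem?_getD,
      List.getElem?_eq_getElem (show m < T.length by omega),
      List.getElem?_eq_getElem hm] using this
  have main : ∀ m, i + 1 ≤ m → m ≤ c → ∀ y, y ∈ boxAt T m (c - m) → keyOf x ≤ keyOf y := by
    intro m hm
    induction m, hm using Nat.le_induction with
    | base =>
      intro _ y hy
      have heq : c - i = (c - (i + 1)) + 1 := by omega
      rw [heq] at hx
      exact hW6 i (c - (i + 1)) x hx y hy
    | succ m hm ih =>
      intro hmc y hy
      obtain ⟨hm1, hm2⟩ := boxAt_valid hy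
      have hmT : m < T.length := by omega
      have hcm : c - m < (T.getD m []).length := by
        have := hlen m hm1
        omega
      have hbm : boxAt T m (c - m) ∈ T.getD m [] := by
        rw [boxAt_eq_getElem hcm]; exact List.getElem_mem hcm
      have hne : boxAt T m (c - m) ≠ 0 := hW3 _ (getD_mem_of_lt _ hmT) _ hbm
      obtain ⟨z, hz⟩ := Multiset.exists_mem_of_ne_zero hne
      have h1 : keyOf x ≤ keyOf z := ih (by omega) z hz
      have heq : c - m = (c - (m + 1)) + 1 := by omega
      rw [heq] at hz
      exact h1.trans (hW6 m (c - (m + 1)) z hz y hy)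
  exact main i' hii hic y hy

private lemma le_of_key_le {a b : ℕ} {p q : Bool} (ha : 1 ≤ a)
    (h : keyOf (a, p) ≤ keyOf (b, q)) : a ≤ b := by
  unfold keyOf at h
  rcases p <;> rcases q <;> simp at h <;> omega

private lemma smono_trans (s : ℕ → ℕ) (n : ℕ)
    (hmono : ∀ i, 1 ≤ i → i + 1 ≤ n → s i ≤ s (i + 1)) :
    ∀ u v, 1 ≤ u → u ≤ v → v ≤ n → s u ≤ s v := by
  intro u v h1 huv
  induction v, huv using Nat.le_induction with
  | base => intro _; exact le_rfl
  | succ v hv ih =>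
    intro hvn
    exact (ih (by omega)).trans (hmono v (by omega) hvn)

private lemma no_desc_contra {n : ℕ} {T : SVTRep} (hT : IsStdSVT n T) (s : ℕ → ℕ)
    (hmono : ∀ i, 1 ≤ i → i + 1 ≤ n → s i ≤ s (i + 1))
    (hdesc : ∀ i ∈ Ddesc T, i + 1 ≤ n → s i < s (i + 1))
    {a b : ℕ} {pa pb : Bool} {ia ka ib kb : ℕ}
    (hab : a < b) (ha1 : 1 ≤ a) (hbn : b ≤ n)
    (hA : (a, pa) ∈ boxAt T ia ka) (hB : (b, pb) ∈ boxAt T ib kb)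
    (hs : s a = s b)
    (hcase : (pa = false ∧ pb = true) ∨
             (pa = false ∧ pb = false ∧ ia < ib) ∨
             (pa = true ∧ pb = true ∧ ib ≤ ia ∧ (ia, ka) ≠ (ib, kb))) : False := by
  have hstd := hT.2
  have hocc : ∀ j, ∃ q : Bool × ℕ × ℕ,
      a ≤ j → j ≤ b → (j, q.1) ∈ boxAt T q.2.1 q.2.2 := by
    intro j
    by_cases hj : a ≤ j ∧ j ≤ b
    · obtain ⟨p, i, k, h⟩ := exists_occ hstd (by omega : 1 ≤ j) (by omega : j ≤ n)
      exact ⟨(p, i, k), fun _ _ => h⟩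
    · exact ⟨(false, 0, 0), fun h1 h2 => absurd ⟨h1, h2⟩ hj⟩
  choose F hF using hocc
  have hFmem : ∀ j, a ≤ j → j ≤ b → (j, (F j).1) ∈ boxAt T (F j).2.1 (F j).2.2 := hF
  have hEa := occ_unique hstd (hFmem a le_rfl (by omega)) hA
  have hEb := occ_unique hstd (hFmem b (by omega) le_rfl) hB
  have hdesc' : ∀ j, a ≤ j → j < b → j ∈ Ddesc T → False := by
    intro j hja hjb hDj
    have h1 : s a ≤ s j := smono_trans s n hmono a j ha1 hja (by omega)
    have h2 : s (j + 1) ≤ s b := smono_trans s n hmono (j + 1) b (by omega) (by omega) hbn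
    have h3 : s j < s (j + 1) := hdesc j hDj (by omega)
    omega
  have mkD1 : ∀ j, a ≤ j → j < b → (F j).1 = false → (F (j + 1)).1 = true → False := by
    intro j hja hjb hfj hfj1
    apply hdesc' j hja hjb
    refine ⟨by omega, Or.inl ⟨?_, ?_⟩⟩
    · have hm := hFmem j hja (by omega)
      rw [hfj] at hm
      rw [posOf_eq hstd hm]; rfl
    · have hm := hFmem (j + 1) (by omega) (by omega)
      rw [hfj1] at hm
      rw [posOf_eq hstd hm]; rfl
  have mkD2 : ∀ j, a ≤ j → j < b → (F j).1 = false → (F (j + 1)).1 = false →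
      (F j).2.1 < (F (j + 1)).2.1 → False := by
    intro j hja hjb hfj hfj1 hro
    apply hdesc' j hja hjb
    refine ⟨by omega, Or.inr (Or.inl ⟨((F j).2.1, (F j).2.2),
      ((F (j + 1)).2.1, (F (j + 1)).2.2), ?_, ?_, hro⟩)⟩
    · have hm := hFmem j hja (by omega)
      rw [hfj] at hm
      exact posOf_eq hstd hm
    · have hm := hFmem (j + 1) (by omega) (by omega)
      rw [hfj1] at hm
      exact posOf_eq hstd hm
  have mkD3 : ∀ j, a ≤ j → j < b → (F j).1 = true → (F (j + 1)).1 = true →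
      (F (j + 1)).2.1 ≤ (F j).2.1 →
      ((F j).2.1, (F j).2.2) ≠ ((F (j + 1)).2.1, (F (j + 1)).2.2) → False := by
    intro j hja hjb hfj hfj1 hro hne
    apply hdesc' j hja hjb
    refine ⟨by omega, Or.inr (Or.inr ⟨((F j).2.1, (F j).2.2),
      ((F (j + 1)).2.1, (F (j + 1)).2.2), ?_, ?_, hro, hne⟩)⟩
    · have hm := hFmem j hja (by omega)
      rw [hfj] at hm
      exact posOf_eq hstd hm
    · have hm := hFmem (j + 1) (by omega) (by omega)
      rw [hfj1] at hm
      exact posOf_eq hstd hm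
  have switch : ∀ u v, a ≤ u → u < v → v ≤ b → (F u).1 = false → (F v).1 = true → False := by
    intro u v h1 h2 h3 hu hv
    have key : ∀ d u', a ≤ u' → u' + d ≤ b → (F u').1 = false →
        (F (u' + d)).1 = true → False := by
      intro d
      induction d with
      | zero =>
        intro u' _ _ hh1 hh2
        simp only [Nat.add_zero] at hh2
        rw [hh1] at hh2
        exact Bool.noConfusion hh2
      | succ d ih =>
        intro u' hau hub hh1 hh2
        by_cases hf : (F (u' + 1)).1 = true
        · exact mkD1 u' hau (by omega) hh1 hf
        · refine ih (u' + 1) (by omega) (by omega) (by simpa using hf) ?_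
          rw [show u' + 1 + d = u' + (d + 1) by omega]
          exact hh2
    refine key (v - u) u h1 (by omega) hu ?_
    rw [show u + (v - u) = v by omega]
    exact hv
  rcases hcase with ⟨hpa, hpb⟩ | ⟨hpa, hpb, hii⟩ | ⟨hpa, hpb, hii, hne⟩
  · exact switch a b le_rfl hab le_rfl (hEa.1.trans hpa)
      ((hEb.1.trans hpb))
  · -- both unprimed, row increases
    by_cases hall : ∀ j, a ≤ j → j ≤ b → (F j).1 = false
    · have step : ∀ d u, a ≤ u → u + d ≤ b → (F u).2.1 < (F (u + d)).2.1 → False := by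
        intro d
        induction d with
        | zero =>
          intro u _ _ h
          simp only [Nat.add_zero] at h
          omega
        | succ d ih =>
          intro u hau hub hro
          by_cases h1 : (F u).2.1 < (F (u + 1)).2.1
          · exact mkD2 u hau (by omega) (hall u hau (by omega))
              (hall (u + 1) (by omega) (by omega)) h1
          · refine ih (u + 1) (by omega) (by omega) ?_
            rw [show u + 1 + d = u + (d + 1) by omega]
            omega
      refine step (b - a) a le_rfl (by omega) ?_
      rw [show a + (b - a) = b by omega]
      rw [hEa.2.1, hEb.2.1]
      exact hii
    · push_neg at hall
      obtain ⟨j, hja, hjb, hjf⟩ := hall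
      have hjt : (F j).1 = true := by
        cases hfj : (F j).1
        · exact absurd hfj hjf
        · rfl
      have hja' : a < j := by
        rcases eq_or_lt_of_le hja with rfl | h
        · rw [hEa.1, hpa] at hjt; exact Bool.noConfusion hjt
        · exact h
      have hjb' : j < b := by
        rcases eq_or_lt_of_le hjb with rfl | h
        · rw [hEb.1, hpb] at hjt; exact Bool.noConfusion hjt
        · exact h
      exact switch a j le_rfl hja' (by omega) (hEa.1.trans hpa) hjt
  · -- both primed
    by_cases hall : ∀ j, a ≤ j → j ≤ b → (F j).1 = true
    · -- rows weakly increase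
      have mono' : ∀ d u, a ≤ u → u + d ≤ b → (F u).2.1 ≤ (F (u + d)).2.1 := by
        intro d
        induction d with
        | zero => intro u _ _; exact le_rfl
        | succ d ih =>
          intro u hau hub
          by_cases h1 : (F u).2.1 ≤ (F (u + 1)).2.1
          · have := ih (u + 1) (by omega) (by omega)
            rw [show u + 1 + d = u + (d + 1) by omega] at this
            omega
          · exfalso
            have hro : (F (u + 1)).2.1 ≤ (F u).2.1 := by omega
            have hne2 : ((F u).2.1, (F u).2.2) ≠ ((F (u + 1)).2.1, (F (u + 1)).2.2) := by
              intro hcon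
              have := congrArg Prod.fst hcon
              simp at this
              omega
            exact mkD3 u hau (by omega) (hall u hau (by omega))
              (hall (u + 1) (by omega) (by omega)) hro hne2
      have hrowall : ∀ j, a ≤ j → j ≤ b → (F j).2.1 = (F a).2.1 := by
        intro j hja hjb
        have h1 := mono' (j - a) a le_rfl (by omega)
        have h2 := mono' (b - j) j hja (by omega)
        rw [show a + (j - a) = j by omega] at h1
        rw [show j + (b - j) = b by omega] at h2
        have hab2 : (F b).2.1 ≤ (F a).2.1 := by
          rw [hEa.2.1, hEb.2.1]; exact hii
        omega
      have posconst : ∀ d u, a ≤ u → u + d ≤ b →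
          ((F u).2.1, (F u).2.2) = ((F (u + d)).2.1, (F (u + d)).2.2) := by
        intro d
        induction d with
        | zero => intro u _ _; rfl
        | succ d ih =>
          intro u hau hub
          have hro : (F (u + 1)).2.1 ≤ (F u).2.1 := by
            rw [hrowall u hau (by omega), hrowall (u + 1) (by omega) (by omega)]
          by_cases h1 : ((F u).2.1, (F u).2.2) = ((F (u + 1)).2.1, (F (u + 1)).2.2)
          · have := ih (u + 1) (by omega) (by omega)
            rw [show u + 1 + d = u + (d + 1) by omega] at this
            exact h1.trans this
          · exact absurd (mkD3 u hau (by omega) (hall u hau (by omega))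
              (hall (u + 1) (by omega) (by omega)) hro h1) not_false
      have := posconst (b - a) a le_rfl (by omega)
      rw [show a + (b - a) = b by omega] at this
      rw [hEa.2.1, hEa.2.2, hEb.2.1, hEb.2.2] at this
      exact hne this
    · push_neg at hall
      obtain ⟨j, hja, hjb, hjf⟩ := hall
      have hjt : (F j).1 = false := by
        cases hfj : (F j).1
        · rfl
        · exact absurd hfj hjf
      have hjb' : j < b := by
        rcases eq_or_lt_of_le hjb with rfl | h
        · rw [hEb.1, hpb] at hjt; exact Bool.noConfusion hjt
        · exact h
      exact switch j b hja hjb' le_rfl hjt (hEb.1.trans hpb)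


private lemma sum_map_msmap (g : ℕ × Bool → ℕ × Bool) (l : List (Multiset (ℕ × Bool))) :
    (l.map (Multiset.map g)).sum = Multiset.map g l.sum := by
  induction l with
  | nil => simp
  | cons x t ih => simp [ih]

private lemma totalMS_relabel (s : ℕ → ℕ) (T : SVTRep) :
    totalMS (relabel s T) = Multiset.map (fun e => (s e.1, e.2)) (totalMS T) := by
  unfold totalMS relabel
  rw [List.map_map]
  induction T with
  | nil => simp
  | cons r t ih =>
    simp only [List.map_cons, List.sum_cons, Function.comp_apply, Multiset.map_add]
    rw [sum_map_msmap, ih]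

private lemma key_lt_case {u v : ℕ} {p q : Bool} (h1 : 1 ≤ u) (huv : u < v) :
    keyOf (u, p) ≤ keyOf (v, q) := by
  cases p <;> cases q <;> simp [keyOf] <;> omega

private lemma key_eq_case {u v : ℕ} {p q : Bool} (huv : u = v)
    (h : ¬(p = false ∧ q = true)) : keyOf (u, p) ≤ keyOf (v, q) := by
  subst huv
  cases p <;> cases q
  · exact le_rfl
  · exact absurd ⟨rfl, rfl⟩ h
  · simp [keyOf]
  · exact le_rfl

private lemma col_case {n : ℕ} {T : SVTRep} (hT : IsStdSVT n T) (s : ℕ → ℕ)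
    (hmono : ∀ i, 1 ≤ i → i + 1 ≤ n → s i ≤ s (i + 1))
    (hdesc : ∀ i ∈ Ddesc T, i + 1 ≤ n → s i < s (i + 1))
    {a b c i₁ i₂ : ℕ}
    (h12 : i₁ < i₂) (h2c : i₂ ≤ c)
    (ha : (a, false) ∈ boxAt T i₁ (c - i₁)) (hb : (b, false) ∈ boxAt T i₂ (c - i₂))
    (hs : s a = s b) : False := by
  have hkey := key_le_of_col hT.1.1 h12 h2c ha hb
  have hra := letter_range hT.2 (mem_totalMS_of_boxAt ha)
  have hrb := letter_range hT.2 (mem_totalMS_of_boxAt hb)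
  have hne : a ≠ b := by
    intro h; subst h
    have := (occ_unique hT.2 ha hb).2.1
    omega
  have hab : a < b := lt_of_le_of_ne (le_of_key_le hra.1 hkey) hne
  exact no_desc_contra hT s hmono hdesc hab hra.1 hrb.2 ha hb hs
    (Or.inr (Or.inl ⟨rfl, rfl, h12⟩))

private lemma row_case {n : ℕ} {T : SVTRep} (hT : IsStdSVT n T) (s : ℕ → ℕ)
    (hmono : ∀ i, 1 ≤ i → i + 1 ≤ n → s i ≤ s (i + 1))
    (hdesc : ∀ i ∈ Ddesc T, i + 1 ≤ n → s i < s (i + 1))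
    {a b i k₁ k₂ : ℕ}
    (h12 : k₁ < k₂)
    (ha : (a, true) ∈ boxAt T i k₁) (hb : (b, true) ∈ boxAt T i k₂)
    (hs : s a = s b) : False := by
  have hkey := key_le_of_row hT.1.1 h12 ha hb
  have hra := letter_range hT.2 (mem_totalMS_of_boxAt ha)
  have hrb := letter_range hT.2 (mem_totalMS_of_boxAt hb)
  have hne : a ≠ b := by
    intro h; subst h
    have := (occ_unique hT.2 ha hb).2.2
    omega
  have hab : a < b := lt_of_le_of_ne (le_of_key_le hra.1 hkey) hne
  exact no_desc_contra hT s hmono hdesc hab hra.1 hrb.2 ha hb hs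
    (Or.inr (Or.inr ⟨rfl, rfl, le_rfl, by simp [h12.ne]⟩))


end Stmt12Aux

/-- if `T` is a standard set-valued shifted tableau on `n`
letters and `x_{s 1} ⋯ x_{s n}` is a monomial agreeing with the descent set of
`T` (weakly increasing, strictly at descents), then the relabeled tableau
`T(σ)` is a weak set-valued shifted tableau. -/
theorem stmt12 (n : ℕ) (T : SVTRep) (hT : IsStdSVT n T) (s : ℕ → ℕ)
    (hpos : ∀ i, 1 ≤ i → i ≤ n → 1 ≤ s i)
    (hmono : ∀ i, 1 ≤ i → i + 1 ≤ n → s i ≤ s (i + 1))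
    (hdesc : ∀ i ∈ Ddesc T, i + 1 ≤ n → s i < s (i + 1)) :
    IsWSVT (relabel s T) := by
  obtain ⟨⟨hW, hnodup⟩, hstd⟩ := hT
  have hWfull := hW
  obtain ⟨hW1, hW2, hW3, hW4, hW5, hW6, hW7, hW8, hW9⟩ := hW
  have hIsStd : IsStdSVT n T := ⟨⟨hWfull, hnodup⟩, hstd⟩
  have hrange : ∀ {e : ℕ × Bool} {i k : ℕ}, e ∈ boxAt T i k → 1 ≤ e.1 ∧ e.1 ≤ n :=
    fun he => letter_range hstd (mem_totalMS_of_boxAt he)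
  have hsm := smono_trans s n hmono
  refine ⟨?_, ?_, ?_, ?_, ?_, ?_, ?_, ?_, ?_⟩
  · intro r hr
    obtain ⟨r₀, hr₀, rfl⟩ := List.mem_map.mp hr
    simpa using hW1 r₀ hr₀
  · unfold relabel
    rw [List.Chain', List.isChain_map]
    simpa [List.Chain'] using hW2
  · intro r hr b hb
    obtain ⟨r₀, hr₀, rfl⟩ := List.mem_map.mp hr
    obtain ⟨b₀, hb₀, rfl⟩ := List.mem_map.mp hb
    simpa [Multiset.map_eq_zero] using hW3 r₀ hr₀ b₀ hb₀
  · intro e he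
    rw [totalMS_relabel] at he
    obtain ⟨e₀, he₀, rfl⟩ := Multiset.mem_map.mp he
    have hr := letter_range hstd he₀
    exact hpos e₀.1 hr.1 hr.2
  · intro i k x hx y hy
    rw [boxAt_relabel] at hx hy
    obtain ⟨⟨a, pa⟩, hx₀, rfl⟩ := Multiset.mem_map.mp hx
    obtain ⟨⟨b, pb⟩, hy₀, rfl⟩ := Multiset.mem_map.mp hy
    have hkey := hW5 i k _ hx₀ _ hy₀
    have hra := hrange hx₀
    have hrb := hrange hy₀
    have hne : a ≠ b := by
      intro h; subst h
      have := (occ_unique hstd hx₀ hy₀).2.2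
      omega
    have hab : a < b := lt_of_le_of_ne (le_of_key_le hra.1 hkey) hne
    have hsle : s a ≤ s b := hsm a b hra.1 (le_of_lt hab) hrb.2
    rcases lt_or_eq_of_le hsle with hlt | heq
    · exact key_lt_case (hpos a hra.1 hra.2) hlt
    · by_cases hc : pa = false ∧ pb = true
      · exact (no_desc_contra hIsStd s hmono hdesc hab hra.1 hrb.2 hx₀ hy₀ heq
          (Or.inl hc)).elim
      · exact key_eq_case heq hc
  · intro i k x hx y hy
    rw [boxAt_relabel] at hx hy
    obtain ⟨⟨a, pa⟩, hx₀, rfl⟩ := Multiset.mem_map.mp hx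
    obtain ⟨⟨b, pb⟩, hy₀, rfl⟩ := Multiset.mem_map.mp hy
    have hkey := hW6 i k _ hx₀ _ hy₀
    have hra := hrange hx₀
    have hrb := hrange hy₀
    have hne : a ≠ b := by
      intro h; subst h
      have := (occ_unique hstd hx₀ hy₀).2.1
      omega
    have hab : a < b := lt_of_le_of_ne (le_of_key_le hra.1 hkey) hne
    have hsle : s a ≤ s b := hsm a b hra.1 (le_of_lt hab) hrb.2
    rcases lt_or_eq_of_le hsle with hlt | heq
    · exact key_lt_case (hpos a hra.1 hra.2) hlt
    · by_cases hc : pa = false ∧ pb = true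
      · exact (no_desc_contra hIsStd s hmono hdesc hab hra.1 hrb.2 hx₀ hy₀ heq
          (Or.inl hc)).elim
      · exact key_eq_case heq hc
  · intro i e he
    rw [boxAt_relabel] at he
    obtain ⟨e₀, he₀, rfl⟩ := Multiset.mem_map.mp he
    exact hW7 i e₀ he₀
  · intro v c i₁ h₁ i₂ h₂
    simp only [Set.mem_setOf_eq] at h₁ h₂
    obtain ⟨hc₁, hm₁⟩ := h₁
    obtain ⟨hc₂, hm₂⟩ := h₂
    rw [boxAt_relabel] at hm₁ hm₂
    obtain ⟨⟨a, pa⟩, ha₀, hae⟩ := Multiset.mem_map.mp hm₁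
    obtain ⟨⟨b, pb⟩, hb₀, hbe⟩ := Multiset.mem_map.mp hm₂
    simp only [Prod.mk.injEq] at hae hbe
    obtain ⟨hav, rfl⟩ := hae
    obtain ⟨hbv, rfl⟩ := hbe
    by_contra hne12
    rcases lt_or_gt_of_ne hne12 with hlt | hgt
    · exact col_case hIsStd s hmono hdesc hlt hc₂ ha₀ hb₀ (by omega)
    · exact col_case hIsStd s hmono hdesc hgt hc₁ hb₀ ha₀ (by omega)
  · intro v i k₁ h₁ k₂ h₂
    simp only [Set.mem_setOf_eq] at h₁ h₂
    rw [boxAt_relabel] at h₁ h₂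
    obtain ⟨⟨a, pa⟩, ha₀, hae⟩ := Multiset.mem_map.mp h₁
    obtain ⟨⟨b, pb⟩, hb₀, hbe⟩ := Multiset.mem_map.mp h₂
    simp only [Prod.mk.injEq] at hae hbe
    obtain ⟨hav, rfl⟩ := hae
    obtain ⟨hbv, rfl⟩ := hbe
    by_contra hne12
    rcases lt_or_gt_of_ne hne12 with hlt | hgt
    · exact row_case hIsStd s hmono hdesc hlt ha₀ hb₀ (by omega)
    · exact row_case hIsStd s hmono hdesc hgt hb₀ ha₀ (by omega)
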